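/- (Theorem 1, single-mode case with cell boundaries through the origin.) Let A ∈ ℝ^{n×n}, B ∈ ℝ^{n×p}, C ∈ ℝ^{k×n} define a mode of the concrete PWA system, and F ∈ ℝ^{m×m}, G ∈ ℝ^{m×q}, H ∈ ℝ^{k×m}, L ∈ ℝ^{q×m} define the transformed linear abstraction. Let P ∈ ℝ^{n×m}, Q ∈ ℝ^{p×m} satisfy H = C P and P F = A P + B Q, and let R ∈ ℝ^{p×q}, K ∈ ℝ^{p×n} be interface gains. Set N = n + m, A′ = diag(A + B K, F + G L), C′ = [C 0] ∈ ℝ^{k×N}. Let M be a symmetric positive definite N×N matrix, λ > 0, κ > 0, E a b×N matrix and W a symmetric matrix with nonnegative entries, such that M − C′ᵀC′ ⪰ 0 and A′ᵀM + MA′ + EᵀWE + λM ⪯ 0. Suppose x₁ : ℝ → ℝⁿ and x₂ : ℝ → ℝᵐ satisfy, for all t ≥ 0: x₁ has derivative A x₁(t) + B u₁(t) + c(t) at t with u₁(t) = R ū₂(t) + (Q + R L) x₂(t) + K(x₁(t) − P x₂(t)); x₂ has derivative (F + G L) x₂(t) + G ū₂(t) at t; the joint state ω(t) = (x₁(t)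 − P x₂(t), x₂(t)) ∈ ℝ^N satisfies E ω(t) ≥ 0 entrywise; and the vectors v₁(t) = ((B R − P G) L x₂(t), 0), v₂(t) = ((B R − P G) ū₂(t), G ū₂(t)), c′(t) = (c(t), 0) in ℝ^N satisfy √(v₁(t)ᵀMv₁(t)) ≤ β₁, √(v₂(t)ᵀMv₂(t)) ≤ β₂, √(c′(t)ᵀMc′(t)) ≤ β₃. Then for all t ≥ 0, the output error satisfies ‖C x₁(t) − H x₂(t)‖ ≤ max( κ·V(ω(0)), (2/λ)(β₁ + β₂ + β₃) ), where V(ω) = (1/κ)√(ωᵀMω). -/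

import Mathlib

open Matrix

set_option linter.unusedSectionVars false

section aux
variable {ι : Type*} [Fintype ι] [DecidableEq ι]

open scoped MatrixOrder in
lemma psd_sqrt_ex {M : Matrix ι ι ℝ} (hM : M.PosSemidef) :
    ∃ S : Matrix ι ι ℝ, Sᵀ = S ∧ S * S = M := by
  have h0 : 0 ≤ M := Matrix.nonneg_iff_posSemidef.mpr hM
  refine ⟨CFC.sqrt M, ?_, CFC.sqrt_mul_sqrt_self M h0⟩
  have := (CFC.sqrt_nonneg M).posSemidef.1
  simpa [Matrix.IsHermitian, Matrix.conjTranspose_eq_transpose_of_trivial] using this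

noncomputable def Matrix.PosSemidef.sqrt {M : Matrix ι ι ℝ} (hM : M.PosSemidef) :
    Matrix ι ι ℝ := Classical.choose (psd_sqrt_ex hM)

lemma Matrix.PosSemidef.sqrt_mul_self {M : Matrix ι ι ℝ} (hM : M.PosSemidef) :
    hM.sqrt * hM.sqrt = M := (Classical.choose_spec (psd_sqrt_ex hM)).2

lemma Matrix.PosSemidef.sqrt_transpose {M : Matrix ι ι ℝ} (hM : M.PosSemidef) :
    hM.sqrtᵀ = hM.sqrt := (Classical.choose_spec (psd_sqrt_ex hM)).1

lemma psd_qf {M : Matrix ι ι ℝ} (hM : M.PosSemidef) (x : ι → ℝ) :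
    0 ≤ x ⬝ᵥ M *ᵥ x := by simpa using hM.dotProduct_mulVec_nonneg x

lemma dot_transpose {ι' : Type*} [Fintype ι'] (A : Matrix ι' ι ℝ)
    (x : ι → ℝ) (y : ι' → ℝ) : x ⬝ᵥ (Aᵀ *ᵥ y) = (A *ᵥ x) ⬝ᵥ y := by
  rw [Matrix.dotProduct_mulVec, Matrix.vecMul_transpose]

lemma dot_symm {M : Matrix ι ι ℝ} (hMs : Mᵀ = M) (x y : ι → ℝ) :
    x ⬝ᵥ M *ᵥ y = y ⬝ᵥ M *ᵥ x := by
  conv_lhs => rw [← hMs]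
  rw [dot_transpose, dotProduct_comm]

lemma psd_factor {M : Matrix ι ι ℝ} (hM : M.PosSemidef) (x y : ι → ℝ) :
    x ⬝ᵥ M *ᵥ y = (hM.sqrt *ᵥ x) ⬝ᵥ (hM.sqrt *ᵥ y) := by
  conv_lhs => rw [← hM.sqrt_mul_self]
  rw [← Matrix.mulVec_mulVec, Matrix.dotProduct_mulVec]
  congr 1
  have hs : hM.sqrtᵀ = hM.sqrt := by
    exact hM.sqrt_transpose
  rw [← hs, Matrix.vecMul_transpose, hs]

lemma psd_cs {M : Matrix ι ι ℝ} (hM : M.PosSemidef) (x y : ι → ℝ) :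
    x ⬝ᵥ M *ᵥ y ≤ Real.sqrt (x ⬝ᵥ M *ᵥ x) * Real.sqrt (y ⬝ᵥ M *ᵥ y) := by
  rw [psd_factor hM x y, psd_factor hM x x, psd_factor hM y y]
  set a := hM.sqrt *ᵥ x
  set b := hM.sqrt *ᵥ y
  have h := Finset.sum_mul_sq_le_sq_mul_sq Finset.univ a b
  calc a ⬝ᵥ b ≤ |a ⬝ᵥ b| := le_abs_self _
    _ = Real.sqrt ((a ⬝ᵥ b) ^ 2) := (Real.sqrt_sq_eq_abs _).symm
    _ ≤ Real.sqrt ((∑ i, a i ^ 2) * ∑ i, b i ^ 2) := Real.sqrt_le_sqrt (by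
        simpa [dotProduct] using h)
    _ = Real.sqrt (a ⬝ᵥ a) * Real.sqrt (b ⬝ᵥ b) := by
        rw [Real.sqrt_mul (by positivity)]
        simp [dotProduct, sq]

lemma psd_tri {M : Matrix ι ι ℝ} (hM : M.PosSemidef) (x y : ι → ℝ) :
    Real.sqrt ((x + y) ⬝ᵥ M *ᵥ (x + y)) ≤
      Real.sqrt (x ⬝ᵥ M *ᵥ x) + Real.sqrt (y ⬝ᵥ M *ᵥ y) := by
  have hx := psd_qf hM x
  have hy := psd_qf hM y
  have hcs := psd_cs hM x y
  have hcs' := psd_cs hM y x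
  have hexp : (x + y) ⬝ᵥ M *ᵥ (x + y) =
      x ⬝ᵥ M *ᵥ x + (x ⬝ᵥ M *ᵥ y + y ⬝ᵥ M *ᵥ x) + y ⬝ᵥ M *ᵥ y := by
    simp [Matrix.mulVec_add, add_dotProduct, dotProduct_add]
    ring
  rw [← Real.sqrt_sq (by positivity : (0:ℝ) ≤ Real.sqrt (x ⬝ᵥ M *ᵥ x) + Real.sqrt (y ⬝ᵥ M *ᵥ y))]
  apply Real.sqrt_le_sqrt
  rw [hexp, add_sq]
  rw [Real.sq_sqrt hx, Real.sq_sqrt hy]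
  nlinarith [hcs, hcs']

lemma hasDerivAt_qf {M : Matrix ι ι ℝ} {f g : ℝ → ι → ℝ} {f' g' : ι → ℝ} {t : ℝ}
    (hf : ∀ i, HasDerivAt (fun s => f s i) (f' i) t)
    (hg : ∀ i, HasDerivAt (fun s => g s i) (g' i) t) :
    HasDerivAt (fun s => f s ⬝ᵥ M *ᵥ g s)
      (f' ⬝ᵥ M *ᵥ g t + f t ⬝ᵥ M *ᵥ g') t := by
  have key : HasDerivAt (fun s => ∑ i, f s i * ∑ j, M i j * g s j)
      (∑ i, (f' i * (∑ j, M i j * g t j) + f t i * ∑ j, M i j * g' j)) t := by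
    apply HasDerivAt.fun_sum
    intro i _
    exact (hf i).mul (HasDerivAt.fun_sum (fun j _ => (hg j).const_mul (M i j)))
  have e1 : ∀ (u v : ι → ℝ), u ⬝ᵥ M *ᵥ v = ∑ i, u i * ∑ j, M i j * v j := by
    intro u v; simp [dotProduct, Matrix.mulVec]
  simp only [e1] at *
  simpa [Finset.sum_add_distrib] using key

end aux

lemma dyn_identity {n m p q : ℕ}
    (A : Matrix (Fin n) (Fin n) ℝ) (B : Matrix (Fin n) (Fin p) ℝ)
    (F : Matrix (Fin m) (Fin m) ℝ) (G : Matrix (Fin m) (Fin q) ℝ)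
    (L : Matrix (Fin q) (Fin m) ℝ)
    (P : Matrix (Fin n) (Fin m) ℝ) (Q : Matrix (Fin p) (Fin m) ℝ)
    (R : Matrix (Fin p) (Fin q) ℝ) (K : Matrix (Fin p) (Fin n) ℝ)
    (hPF : P * F = A * P + B * Q)
    (x₁ : Fin n → ℝ) (x₂ : Fin m → ℝ) (u : Fin q → ℝ) (c : Fin n → ℝ) :
    A *ᵥ x₁ + B *ᵥ (R *ᵥ u + (Q + R * L) *ᵥ x₂ + K *ᵥ (x₁ - P *ᵥ x₂)) + c
      - P *ᵥ ((F + G * L) *ᵥ x₂ + G *ᵥ u)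
    = (A + B * K) *ᵥ (x₁ - P *ᵥ x₂) + (B * R - P * G) *ᵥ (L *ᵥ x₂)
      + ((B * R - P * G) *ᵥ u + c) := by
  have h1 : (P * F) *ᵥ x₂ = (A * P) *ᵥ x₂ + (B * Q) *ᵥ x₂ := by
    rw [hPF, Matrix.add_mulVec]
  simp only [Matrix.mulVec_add, Matrix.add_mulVec, Matrix.mulVec_sub, Matrix.sub_mulVec,
    Matrix.mulVec_mulVec, Matrix.add_mul, Matrix.mul_add, Matrix.sub_mul, Matrix.mul_sub,
    Matrix.mul_assoc] at h1 ⊢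
  rw [h1]
  abel

lemma ode_bound {V : ℝ → ℝ} {lam β : ℝ} (hlam : 0 < lam) (hβ : 0 ≤ β)
    (hVpos : ∀ t, 0 ≤ V t)
    (hV : ∀ t ≥ (0:ℝ), ∃ D, HasDerivAt V D t ∧ D ≤ -lam * V t + 2*β*Real.sqrt (V t)) :
    ∀ t ≥ (0:ℝ), Real.sqrt (V t) ≤ max (Real.sqrt (V 0)) (2*β/lam) := by
  intro t ht
  apply le_of_forall_pos_le_add
  intro ε hε
  set δ := ε ^ 2 with hδdef
  have hδ : 0 < δ := by positivity
  have hsqδ : Real.sqrt δ = ε := by rw [hδdef, Real.sqrt_sq hε.le]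
  set s : ℝ → ℝ := fun u => Real.sqrt (V u + δ) with hs
  have hspos : ∀ u, 0 < s u := fun u => Real.sqrt_pos.mpr (by linarith [hVpos u])
  have hsδ : ∀ u, Real.sqrt δ ≤ s u := fun u =>
    Real.sqrt_le_sqrt (by linarith [hVpos u])
  have hssq : ∀ u, s u ^ 2 = V u + δ := fun u =>
    Real.sq_sqrt (by linarith [hVpos u])
  have hVs : ∀ u, Real.sqrt (V u) ≤ s u := fun u =>
    Real.sqrt_le_sqrt (by linarith)
  have hsder : ∀ u ≥ (0:ℝ), ∃ D, HasDerivAt s D u ∧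
      D ≤ -(lam/2) * s u + (β + lam/2 * Real.sqrt δ) := by
    intro u hu
    obtain ⟨D, hD, hDle⟩ := hV u hu
    have hVu := hVpos u
    refine ⟨D / (2 * Real.sqrt (V u + δ)), (hD.add_const δ).sqrt (by positivity), ?_⟩
    rw [div_le_iff₀ (by positivity)]
    have h1 := hVs u
    have h2 := hsδ u
    have h3 := hssq u
    have h4 : Real.sqrt δ * Real.sqrt δ = δ := Real.mul_self_sqrt hδ.le
    have h5 : Real.sqrt (V u) ≥ 0 := Real.sqrt_nonneg _
    have hD2 : D ≤ -lam * V u + 2*β* s u := by nlinarith [hspos u]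
    have h6 : δ ≤ Real.sqrt δ * s u := by nlinarith [Real.sqrt_nonneg δ]
    have h7 : lam * δ ≤ lam * (Real.sqrt δ * s u) :=
      mul_le_mul_of_nonneg_left h6 hlam.le
    show D ≤ _ * (2 * s u)
    nlinarith [hspos u]
  set κ' : ℝ := 2*β/lam + Real.sqrt δ with hκ'
  set Ψ : ℝ → ℝ := fun u => Real.exp (lam/2 * u) * (s u - κ') with hΨ
  have hΨder : ∀ u ≥ (0:ℝ), ∃ D, HasDerivAt Ψ D u ∧ D ≤ 0 := by
    intro u hu
    obtain ⟨D, hD, hDle⟩ := hsder u hu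
    have hexp : HasDerivAt (fun w => Real.exp (lam/2 * w)) (Real.exp (lam/2 * u) * (lam/2)) u := by
      simpa [mul_comm] using ((hasDerivAt_id u).const_mul (lam/2)).exp
    refine ⟨_, hexp.mul (hD.sub_const κ'), ?_⟩
    have hE : 0 < Real.exp (lam/2*u) := Real.exp_pos _
    have hc : lam/2 * κ' = β + lam/2 * Real.sqrt δ := by
      rw [hκ']; field_simp
    have hkey : (lam/2) * (s u - κ') + D ≤ 0 := by nlinarith
    calc Real.exp (lam/2*u) * (lam/2) * (s u - κ') + Real.exp (lam/2*u) * D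
        = Real.exp (lam/2*u) * ((lam/2) * (s u - κ') + D) := by ring
      _ ≤ Real.exp (lam/2*u) * 0 := by
          exact mul_le_mul_of_nonneg_left hkey hE.le
      _ = 0 := by ring
  have hanti : AntitoneOn Ψ (Set.Ici 0) := by
    apply antitoneOn_of_deriv_nonpos (convex_Ici 0)
    · intro u hu
      obtain ⟨D, hD, _⟩ := hΨder u hu
      exact hD.continuousAt.continuousWithinAt
    · intro u hu
      rw [interior_Ici] at hu
      obtain ⟨D, hD, _⟩ := hΨder u (le_of_lt hu)
      exact hD.differentiableAt.differentiableWithinAt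
    · intro u hu
      rw [interior_Ici] at hu
      obtain ⟨D, hD, hle⟩ := hΨder u (le_of_lt hu)
      rw [hD.deriv]; exact hle
  have hΨt : Ψ t ≤ Ψ 0 := hanti (Set.self_mem_Ici) ht ht
  have hexp1 : (1:ℝ) ≤ Real.exp (lam/2 * t) := by
    rw [show (1:ℝ) = Real.exp 0 by simp]
    exact Real.exp_le_exp.mpr (by positivity)
  have hΨ0 : Ψ 0 = s 0 - κ' := by simp [hΨ]
  have hst : s t ≤ max (s 0) κ' := by
    rcases le_or_gt (s t) κ' with h | h
    · exact le_trans h (le_max_right _ _)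
    · have h1 : s t - κ' ≤ Real.exp (lam/2*t) * (s t - κ') := by
        nlinarith [mul_le_mul_of_nonneg_right hexp1 (by linarith : (0:ℝ) ≤ s t - κ')]
      have h2 : Real.exp (lam/2*t) * (s t - κ') ≤ s 0 - κ' := by
        rw [← hΨ0]; exact hΨt
      have : s t ≤ s 0 := by linarith
      exact le_trans this (le_max_left _ _)
  have hs0 : s 0 ≤ Real.sqrt (V 0) + ε := by
    rw [← hsqδ]
    rw [show Real.sqrt (V 0) + Real.sqrt δ
        = Real.sqrt ((Real.sqrt (V 0) + Real.sqrt δ)^2) from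
      (Real.sqrt_sq (by positivity)).symm]
    apply Real.sqrt_le_sqrt
    have h1 : Real.sqrt (V 0) * Real.sqrt (V 0) = V 0 := Real.mul_self_sqrt (hVpos 0)
    have h2 : Real.sqrt δ * Real.sqrt δ = δ := Real.mul_self_sqrt hδ.le
    nlinarith [Real.sqrt_nonneg (V 0), Real.sqrt_nonneg δ]
  calc Real.sqrt (V t) ≤ s t := hVs t
    _ ≤ max (s 0) κ' := hst
    _ ≤ max (Real.sqrt (V 0)) (2*β/lam) + ε := by
        rw [hκ', hsqδ]
        apply max_le
        · exact le_trans hs0 (by gcongr; exact le_max_left _ _)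
        · gcongr; exact le_max_right _ _

/-- Theorem 1 of the paper, single-mode case with cell boundaries through the origin:
under the simulation-relation conditions `H = C P`, `P F = A P + B Q`, the LMIs
`M - C'ᵀ C' ⪰ 0` and `A'ᵀ M + M A' + Eᵀ W E + λ M ⪯ 0` (with
`A' = diag(A + B K, F + G L)`, `C' = [C 0]`), the interface
`u₁ = R ū₂ + (Q + R L) x₂ + K (x₁ - P x₂)`, the joint state `ω = (x₁ - P x₂, x₂)`
remaining in the cell `E ω ≥ 0`, and the bounds `β₁, β₂, β₃` on the `M`-weighted norms
of `v₁ = ((B R - P G) L x₂, 0)`, `v₂ = ((B R - P G) ū₂, G ū₂)`, `c' = (c, 0)`, the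
output error satisfies
`‖C x₁(t) - H x₂(t)‖ ≤ max (κ V(ω(0))) ((2/λ)(β₁ + β₂ + β₃))` for all `t ≥ 0`, where
`V(ω) = (1/κ)√(ωᵀMω)`. -/
theorem stmt_12 {n m p q k b : ℕ}
    (A : Matrix (Fin n) (Fin n) ℝ) (B : Matrix (Fin n) (Fin p) ℝ)
    (C : Matrix (Fin k) (Fin n) ℝ)
    (F : Matrix (Fin m) (Fin m) ℝ) (G : Matrix (Fin m) (Fin q) ℝ)
    (H : Matrix (Fin k) (Fin m) ℝ) (L : Matrix (Fin q) (Fin m) ℝ)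
    (P : Matrix (Fin n) (Fin m) ℝ) (Q : Matrix (Fin p) (Fin m) ℝ)
    (R : Matrix (Fin p) (Fin q) ℝ) (K : Matrix (Fin p) (Fin n) ℝ)
    (hH : H = C * P) (hPF : P * F = A * P + B * Q)
    (M : Matrix (Fin n ⊕ Fin m) (Fin n ⊕ Fin m) ℝ) (hM : M.PosDef)
    (lam κ : ℝ) (hlam : 0 < lam) (hκ : 0 < κ)
    (E : Matrix (Fin b) (Fin n ⊕ Fin m) ℝ) (W : Matrix (Fin b) (Fin b) ℝ)
    (hW : W.IsSymm) (hWpos : ∀ i j, 0 ≤ W i j)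
    (hCLMI : (M - (Matrix.fromCols C 0)ᵀ * Matrix.fromCols C 0).PosSemidef)
    (hLMI : (-((Matrix.fromBlocks (A + B * K) 0 0 (F + G * L))ᵀ * M
        + M * Matrix.fromBlocks (A + B * K) 0 0 (F + G * L)
        + Eᵀ * W * E + lam • M)).PosSemidef)
    (x₁ : ℝ → Fin n → ℝ) (x₂ : ℝ → Fin m → ℝ)
    (u₁ : ℝ → Fin p → ℝ) (ubar₂ : ℝ → Fin q → ℝ) (c : ℝ → Fin n → ℝ)
    (β₁ β₂ β₃ : ℝ)
    (hx₁ : ∀ t ≥ (0 : ℝ), HasDerivAt x₁ (A *ᵥ x₁ t + B *ᵥ u₁ t + c t) t)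
    (hu₁ : ∀ t ≥ (0 : ℝ),
      u₁ t = R *ᵥ ubar₂ t + (Q + R * L) *ᵥ x₂ t + K *ᵥ (x₁ t - P *ᵥ x₂ t))
    (hx₂ : ∀ t ≥ (0 : ℝ), HasDerivAt x₂ ((F + G * L) *ᵥ x₂ t + G *ᵥ ubar₂ t) t)
    (hcell : ∀ t ≥ (0 : ℝ), ∀ i, 0 ≤ (E *ᵥ Sum.elim (x₁ t - P *ᵥ x₂ t) (x₂ t)) i)
    (hβ₁ : ∀ t ≥ (0 : ℝ),
      Real.sqrt (Sum.elim ((B * R - P * G) *ᵥ (L *ᵥ x₂ t)) 0 ⬝ᵥ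
        M *ᵥ Sum.elim ((B * R - P * G) *ᵥ (L *ᵥ x₂ t)) 0) ≤ β₁)
    (hβ₂ : ∀ t ≥ (0 : ℝ),
      Real.sqrt (Sum.elim ((B * R - P * G) *ᵥ ubar₂ t) (G *ᵥ ubar₂ t) ⬝ᵥ
        M *ᵥ Sum.elim ((B * R - P * G) *ᵥ ubar₂ t) (G *ᵥ ubar₂ t)) ≤ β₂)
    (hβ₃ : ∀ t ≥ (0 : ℝ),
      Real.sqrt (Sum.elim (c t) 0 ⬝ᵥ M *ᵥ Sum.elim (c t) 0) ≤ β₃) :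
    ∀ t ≥ (0 : ℝ),
      ‖(EuclideanSpace.equiv (Fin k) ℝ).symm (C *ᵥ x₁ t - H *ᵥ x₂ t)‖ ≤
        max (κ * ((1 / κ) * Real.sqrt (Sum.elim (x₁ 0 - P *ᵥ x₂ 0) (x₂ 0) ⬝ᵥ
            M *ᵥ Sum.elim (x₁ 0 - P *ᵥ x₂ 0) (x₂ 0))))
          ((2 / lam) * (β₁ + β₂ + β₃)) := by
  classical
  have hMpsd := hM.posSemidef
  have hMs : Mᵀ = M := by
    simpa [Matrix.IsHermitian, Matrix.conjTranspose_eq_transpose_of_trivial] using hM.1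
  set A' : Matrix (Fin n ⊕ Fin m) (Fin n ⊕ Fin m) ℝ :=
    Matrix.fromBlocks (A + B * K) 0 0 (F + G * L) with hA'
  -- the joint state and Lyapunov function
  have hVpos : ∀ u : ℝ, 0 ≤ Sum.elim (x₁ u - P *ᵥ x₂ u) (x₂ u) ⬝ᵥ
      M *ᵥ Sum.elim (x₁ u - P *ᵥ x₂ u) (x₂ u) := fun u => psd_qf hMpsd _
  have hβnn : 0 ≤ β₁ + β₂ + β₃ := by
    have h1 := le_trans (Real.sqrt_nonneg _) (hβ₁ 0 le_rfl)
    have h2 := le_trans (Real.sqrt_nonneg _) (hβ₂ 0 le_rfl)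
    have h3 := le_trans (Real.sqrt_nonneg _) (hβ₃ 0 le_rfl)
    linarith
  have key : ∀ u ≥ (0:ℝ), ∃ D,
      HasDerivAt (fun s => Sum.elim (x₁ s - P *ᵥ x₂ s) (x₂ s) ⬝ᵥ
        M *ᵥ Sum.elim (x₁ s - P *ᵥ x₂ s) (x₂ s)) D u ∧
      D ≤ -lam * (Sum.elim (x₁ u - P *ᵥ x₂ u) (x₂ u) ⬝ᵥ
          M *ᵥ Sum.elim (x₁ u - P *ᵥ x₂ u) (x₂ u))
        + 2*(β₁+β₂+β₃)*Real.sqrt (Sum.elim (x₁ u - P *ᵥ x₂ u) (x₂ u) ⬝ᵥ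
          M *ᵥ Sum.elim (x₁ u - P *ᵥ x₂ u) (x₂ u)) := by
    intro u hu
    set ω : Fin n ⊕ Fin m → ℝ := Sum.elim (x₁ u - P *ᵥ x₂ u) (x₂ u) with hωu
    set v1 : Fin n ⊕ Fin m → ℝ :=
      Sum.elim ((B * R - P * G) *ᵥ (L *ᵥ x₂ u)) 0 with hv1
    set v2 : Fin n ⊕ Fin m → ℝ :=
      Sum.elim ((B * R - P * G) *ᵥ ubar₂ u) (G *ᵥ ubar₂ u) with hv2
    set v3 : Fin n ⊕ Fin m → ℝ := Sum.elim (c u) 0 with hv3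
    have hx1c := hasDerivAt_pi.mp (hx₁ u hu)
    have hx2c := hasDerivAt_pi.mp (hx₂ u hu)
    set ωd : Fin n ⊕ Fin m → ℝ :=
      Sum.elim (A *ᵥ x₁ u + B *ᵥ u₁ u + c u
          - P *ᵥ ((F + G * L) *ᵥ x₂ u + G *ᵥ ubar₂ u))
        ((F + G * L) *ᵥ x₂ u + G *ᵥ ubar₂ u) with hωd
    have hωder : ∀ i, HasDerivAt
        (fun s => Sum.elim (x₁ s - P *ᵥ x₂ s) (x₂ s) i) (ωd i) u := by
      intro i
      cases i with
      | inl a =>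
        have h2 : HasDerivAt (fun s => (P *ᵥ x₂ s) a)
            ((P *ᵥ ((F + G * L) *ᵥ x₂ u + G *ᵥ ubar₂ u)) a) u := by
          simp only [Matrix.mulVec, dotProduct]
          exact HasDerivAt.fun_sum fun j _ => (hx2c j).const_mul (P a j)
        exact (hx1c a).sub h2
      | inr b => exact hx2c b
    have hVD := hasDerivAt_qf (M := M) hωder hωder
    refine ⟨_, hVD, ?_⟩
    -- identify ωd with A' *ᵥ ω + d
    have hmain : A *ᵥ x₁ u + B *ᵥ u₁ u + c u
        - P *ᵥ ((F + G * L) *ᵥ x₂ u + G *ᵥ ubar₂ u)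
        = (A + B * K) *ᵥ (x₁ u - P *ᵥ x₂ u) + (B * R - P * G) *ᵥ (L *ᵥ x₂ u)
          + ((B * R - P * G) *ᵥ ubar₂ u + c u) := by
      rw [hu₁ u hu]
      exact dyn_identity A B F G L P Q R K hPF (x₁ u) (x₂ u) (ubar₂ u) (c u)
    have hAω : A' *ᵥ ω = Sum.elim ((A + B * K) *ᵥ (x₁ u - P *ᵥ x₂ u))
        ((F + G * L) *ᵥ x₂ u) := by
      rw [hA', hωu, Matrix.fromBlocks_mulVec]
      congr 1 <;> simp
    have hωd_eq : ωd = A' *ᵥ ω + (v1 + (v2 + v3)) := by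
      rw [hωd, hmain, hAω, hv1, hv2, hv3]
      funext i
      cases i <;> simp <;> abel
    rw [hωd_eq]
    set d : Fin n ⊕ Fin m → ℝ := v1 + (v2 + v3) with hd
    -- expand the derivative value
    have hD_eq : (A' *ᵥ ω + d) ⬝ᵥ M *ᵥ ω + ω ⬝ᵥ M *ᵥ (A' *ᵥ ω + d)
        = (ω ⬝ᵥ (A'ᵀ * M) *ᵥ ω + ω ⬝ᵥ (M * A') *ᵥ ω) + 2 * (d ⬝ᵥ M *ᵥ ω) := by
      rw [add_dotProduct, Matrix.mulVec_add, dotProduct_add]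
      rw [show (A' *ᵥ ω) ⬝ᵥ M *ᵥ ω = ω ⬝ᵥ (A'ᵀ * M) *ᵥ ω from by
        rw [← Matrix.mulVec_mulVec, dot_transpose]]
      rw [show ω ⬝ᵥ M *ᵥ (A' *ᵥ ω) = ω ⬝ᵥ (M * A') *ᵥ ω from by
        rw [Matrix.mulVec_mulVec]]
      rw [dot_symm hMs ω d]
      ring
    rw [hD_eq]
    -- LMI consequence
    have hLMIq := psd_qf hLMI ω
    have hEW : 0 ≤ ω ⬝ᵥ (Eᵀ * W * E) *ᵥ ω := by
      have he : (Eᵀ * W * E) *ᵥ ω = Eᵀ *ᵥ (W *ᵥ (E *ᵥ ω)) := by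
        rw [Matrix.mulVec_mulVec, Matrix.mulVec_mulVec]
      rw [he, dot_transpose]
      have hcell' : ∀ i, 0 ≤ (E *ᵥ ω) i := hcell u hu
      simp only [dotProduct, Matrix.mulVec]
      apply Finset.sum_nonneg
      intro i _
      apply mul_nonneg (hcell' i)
      apply Finset.sum_nonneg
      intro j _
      exact mul_nonneg (hWpos i j) (hcell' j)
    have hquad : ω ⬝ᵥ (A'ᵀ * M) *ᵥ ω + ω ⬝ᵥ (M * A') *ᵥ ω
        ≤ -lam * (ω ⬝ᵥ M *ᵥ ω) - ω ⬝ᵥ (Eᵀ * W * E) *ᵥ ω := by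
      have hexp : ω ⬝ᵥ (-(A'ᵀ * M + M * A' + Eᵀ * W * E + lam • M)) *ᵥ ω
          = -(ω ⬝ᵥ (A'ᵀ * M) *ᵥ ω + ω ⬝ᵥ (M * A') *ᵥ ω
              + ω ⬝ᵥ (Eᵀ * W * E) *ᵥ ω + lam * (ω ⬝ᵥ M *ᵥ ω)) := by
        rw [Matrix.neg_mulVec, dotProduct_neg]
        rw [Matrix.add_mulVec, Matrix.add_mulVec, Matrix.add_mulVec]
        rw [dotProduct_add, dotProduct_add, dotProduct_add]
        rw [Matrix.smul_mulVec, dotProduct_smul]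
        simp [smul_eq_mul]
      rw [hexp] at hLMIq
      linarith
    -- Cauchy-Schwarz bound on the disturbance term
    have hdle : d ⬝ᵥ M *ᵥ ω ≤ (β₁+β₂+β₃) * Real.sqrt (ω ⬝ᵥ M *ᵥ ω) := by
      have hcs := psd_cs hMpsd d ω
      have htri : Real.sqrt (d ⬝ᵥ M *ᵥ d) ≤ β₁ + β₂ + β₃ := by
        have t1 := psd_tri hMpsd v1 (v2 + v3)
        have t2 := psd_tri hMpsd v2 v3
        have b1 := hβ₁ u hu
        have b2 := hβ₂ u hu
        have b3 := hβ₃ u hu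
        rw [← hv1] at b1
        rw [← hv2] at b2
        rw [← hv3] at b3
        calc Real.sqrt (d ⬝ᵥ M *ᵥ d)
            ≤ Real.sqrt (v1 ⬝ᵥ M *ᵥ v1) + Real.sqrt ((v2+v3) ⬝ᵥ M *ᵥ (v2+v3)) := t1
          _ ≤ Real.sqrt (v1 ⬝ᵥ M *ᵥ v1)
              + (Real.sqrt (v2 ⬝ᵥ M *ᵥ v2) + Real.sqrt (v3 ⬝ᵥ M *ᵥ v3)) := by linarith
          _ ≤ β₁ + β₂ + β₃ := by linarith
      calc d ⬝ᵥ M *ᵥ ω ≤ Real.sqrt (d ⬝ᵥ M *ᵥ d) * Real.sqrt (ω ⬝ᵥ M *ᵥ ω) := hcs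
        _ ≤ (β₁+β₂+β₃) * Real.sqrt (ω ⬝ᵥ M *ᵥ ω) :=
            mul_le_mul_of_nonneg_right htri (Real.sqrt_nonneg _)
    linarith
  -- apply the ODE comparison lemma
  intro t ht
  have hsq := ode_bound hlam hβnn hVpos key t ht
  -- output error bound
  have hCx : C *ᵥ x₁ t - H *ᵥ x₂ t
      = Matrix.fromCols C 0 *ᵥ Sum.elim (x₁ t - P *ᵥ x₂ t) (x₂ t) := by
    rw [Matrix.fromCols_mulVec_sumElim, Matrix.zero_mulVec, add_zero,
      Matrix.mulVec_sub, Matrix.mulVec_mulVec, hH]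
  have hnorm : ‖(EuclideanSpace.equiv (Fin k) ℝ).symm (C *ᵥ x₁ t - H *ᵥ x₂ t)‖
      = Real.sqrt ((C *ᵥ x₁ t - H *ᵥ x₂ t) ⬝ᵥ (C *ᵥ x₁ t - H *ᵥ x₂ t)) := by
    rw [EuclideanSpace.norm_eq]
    congr 1
    simp [dotProduct, Real.norm_eq_abs, sq_abs, sq]
  have hout : ‖(EuclideanSpace.equiv (Fin k) ℝ).symm (C *ᵥ x₁ t - H *ᵥ x₂ t)‖
      ≤ Real.sqrt (Sum.elim (x₁ t - P *ᵥ x₂ t) (x₂ t) ⬝ᵥ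
          M *ᵥ Sum.elim (x₁ t - P *ᵥ x₂ t) (x₂ t)) := by
    rw [hnorm, hCx]
    apply Real.sqrt_le_sqrt
    set ω := Sum.elim (x₁ t - P *ᵥ x₂ t) (x₂ t) with hω
    have h1 : (Matrix.fromCols C 0 *ᵥ ω) ⬝ᵥ (Matrix.fromCols C 0 *ᵥ ω)
        = ω ⬝ᵥ ((Matrix.fromCols C 0)ᵀ * Matrix.fromCols C 0) *ᵥ ω := by
      rw [← Matrix.mulVec_mulVec, dot_transpose]
    rw [h1]
    have h2 := psd_qf hCLMI ω
    rw [Matrix.sub_mulVec, dotProduct_sub] at h2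
    linarith
  have hfinal : κ * ((1 / κ) * Real.sqrt (Sum.elim (x₁ 0 - P *ᵥ x₂ 0) (x₂ 0) ⬝ᵥ
      M *ᵥ Sum.elim (x₁ 0 - P *ᵥ x₂ 0) (x₂ 0)))
      = Real.sqrt (Sum.elim (x₁ 0 - P *ᵥ x₂ 0) (x₂ 0) ⬝ᵥ
      M *ᵥ Sum.elim (x₁ 0 - P *ᵥ x₂ 0) (x₂ 0)) := by
    field_simp
  rw [hfinal, show (2 / lam) * (β₁ + β₂ + β₃) = 2 * (β₁ + β₂ + β₃) / lam by ring]
  exact le_trans hout hsq
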